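/- Let S be a finite set, G a finite group, f : S → G a function, ρ : G →* Matrix (Fin n) (Fin n) ℂ a unitary representation, and P : Matrix (Fin n) (Fin n) ℂ a matrix. If f is P-balanced, i.e. ∑_{s ∈ S} ρ(f s) * P = 0, then ∑_{s ∈ S} (MonoidAlgebra.single (f s) 1) * ρ†(P) = 0 in MonoidAlgebra ℂ G, where ρ†(M) = ∑_{g ∈ G} (trace (ρ(g)ᴴ * M)) • (MonoidAlgebra.single g 1). (Hence in the generalized Deutsch–Jozsa algorithm with oracle f and ancilla state ρ†(P), the amplitude for measuring the query register in the uniform superposition state is zero.) -/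

import Mathlib

open Matrix BigOperators

/-- A matrix representation is unitary if every `ρ g` is a unitary matrix. -/
def IsUnitaryRep {G : Type*} [Group G] {n : ℕ}
    (ρ : G →* Matrix (Fin n) (Fin n) ℂ) : Prop :=
  ∀ g : G, (ρ g)ᴴ * ρ g = 1

/-- A matrix representation is irreducible if the only subspaces of `ℂⁿ`
invariant under every `ρ g` are the zero subspace and the whole space. -/
def IsIrreducibleRep {G : Type*} [Group G] {n : ℕ}
    (ρ : G →* Matrix (Fin n) (Fin n) ℂ) : Prop :=
  ∀ W : Submodule ℂ (Fin n → ℂ),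
    (∀ g : G, ∀ v ∈ W, (ρ g).mulVec v ∈ W) → W = ⊥ ∨ W = ⊤

/-- The adjoint of the linear extension of a representation to the group
algebra: `rhoDag ρ M = ∑ g, trace(ρ(g)ᴴ * M) • MonoidAlgebra.single g 1`. -/
noncomputable def rhoDag {G : Type*} [Group G] [Fintype G] {n : ℕ}
    (ρ : G →* Matrix (Fin n) (Fin n) ℂ)
    (M : Matrix (Fin n) (Fin n) ℂ) : MonoidAlgebra ℂ G :=
  ∑ g : G, (Matrix.trace ((ρ g)ᴴ * M)) • MonoidAlgebra.single g (1 : ℂ)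

theorem stmt12 {S : Type*} [Fintype S] {G : Type*} [Group G] [Fintype G] {n : ℕ}
    (f : S → G) (ρ : G →* Matrix (Fin n) (Fin n) ℂ) (hu : IsUnitaryRep ρ)
    (P : Matrix (Fin n) (Fin n) ℂ)
    (hbal : ∑ s : S, ρ (f s) * P = 0) :
    ∑ s : S, (MonoidAlgebra.single (f s) (1 : ℂ)) * rhoDag ρ P = 0 := by
  have hinv : ∀ g : G, (ρ g)ᴴ = ρ g⁻¹ := by
    intro g
    have h2 : ρ g * ρ g⁻¹ = 1 := by rw [← _root_.map_mul]; simp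
    calc (ρ g)ᴴ = (ρ g)ᴴ * (ρ g * ρ g⁻¹) := by rw [h2, mul_one]
      _ = ((ρ g)ᴴ * ρ g) * ρ g⁻¹ := by rw [mul_assoc]
      _ = ρ g⁻¹ := by rw [hu g, one_mul]
  have key : ∀ g : G, ∑ s : S, Matrix.trace ((ρ ((f s)⁻¹ * g))ᴴ * P) = 0 := by
    intro g
    have h : ∀ s : S, (ρ ((f s)⁻¹ * g))ᴴ * P = (ρ g)ᴴ * (ρ (f s) * P) := by
      intro s
      rw [_root_.map_mul, Matrix.conjTranspose_mul, hinv (f s)⁻¹, inv_inv, ← mul_assoc]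
    simp_rw [h]
    rw [← Matrix.trace_sum, ← Matrix.mul_sum, hbal, Matrix.mul_zero, Matrix.trace_zero]
  calc ∑ s : S, (MonoidAlgebra.single (f s) (1 : ℂ)) * rhoDag ρ P
      = ∑ s : S, ∑ g : G,
        MonoidAlgebra.single (f s * g) (Matrix.trace ((ρ g)ᴴ * P)) := by
        simp [rhoDag, Finset.mul_sum, MonoidAlgebra.smul_single',
          MonoidAlgebra.single_mul_single]
    _ = ∑ s : S, ∑ g : G,
        MonoidAlgebra.single g (Matrix.trace ((ρ ((f s)⁻¹ * g))ᴴ * P)) := by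
        refine Finset.sum_congr rfl fun s _ => ?_
        exact Fintype.sum_equiv (Equiv.mulLeft (f s)) _ _ (fun g => by simp)
    _ = ∑ g : G,
        MonoidAlgebra.single g (∑ s : S, Matrix.trace ((ρ ((f s)⁻¹ * g))ᴴ * P)) := by
        rw [Finset.sum_comm]
        exact Finset.sum_congr rfl fun g _ => (map_sum (MonoidAlgebra.singleAddHom g) _ _).symm
    _ = 0 := by
        refine Finset.sum_eq_zero fun g _ => ?_
        rw [key g]
        simp
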